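/- Let Q be a local ring, f ∈ Q, R = Q/(f), and let (F, ∂) be a complex of finitely generated free R-modules with lifting (F̃, ∂̃) to Q (so F̃ ⊗_Q R = F and ∂̃ ⊗_Q R = ∂, and ∂̃² = f·τ̃ for some map τ̃ of degree -2). Set S = Q/((f) + ann_Q(f)) and τ = τ̃ ⊗_Q S. Then τ : F ⊗_R S → F ⊗_R S is a chain map of degree -2, i.e., τ∘(∂ ⊗ S) = (∂ ⊗ S)∘τ. -/

import Mathlib

/-- **The Eisenbud operator is a chain map.**
Let `Q` be a local ring, `f ∈ Q`, `R = Q/(f)`.  Let `F` be a complex of finitely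
generated free `R`-modules with lifting `(F̃, ∂̃)` to `Q` (the lifting is given by free
`Q`-modules `G n` and `Q`-linear maps `d i j : G i → G j`, the differential being
`d n (n-1)`), so that `∂̃² = f·τ̃` for a degree `-2` map `τ̃` (given by `τ n (n-2)`).
With `S = Q/((f) + ann_Q(f))`, the induced map `τ = τ̃ ⊗_Q S` on `F ⊗_R S` is a chain
map of degree `-2`: equivalently `τ̃∘∂̃ - ∂̃∘τ̃` takes values in `((f) + ann_Q(f))·F̃`. -/
theorem eisenbud_operator_is_chain_map
    (Q : Type) [CommRing Q] [IsLocalRing Q] (f : Q)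
    (G : ℤ → Type) [∀ n, AddCommGroup (G n)] [∀ n, Module Q (G n)]
    [∀ n, Module.Free Q (G n)] [∀ n, Module.Finite Q (G n)]
    (d : ∀ i j : ℤ, G i →ₗ[Q] G j)
    (τ : ∀ i j : ℤ, G i →ₗ[Q] G j)
    (hd2 : ∀ (n : ℤ) (x : G n), d (n - 1) (n - 2) (d n (n - 1) x) = f • τ n (n - 2) x) :
    ∀ (n : ℤ) (x : G n),
      τ (n - 1) (n - 3) (d n (n - 1) x) - d (n - 2) (n - 3) (τ n (n - 2) x) ∈
        ((Ideal.span {f} ⊔ (Ideal.span {f} : Submodule Q Q).annihilator) •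
          (⊤ : Submodule Q (G (n - 3)))) := by
  intro n x
  set y := τ (n - 1) (n - 3) (d n (n - 1) x) - d (n - 2) (n - 3) (τ n (n - 2) x) with hy
  have h1 := hd2 (n - 1) (d n (n - 1) x)
  rw [show n - 1 - 1 = n - 2 by ring, show n - 1 - 2 = n - 3 by ring] at h1
  have hfy : f • y = 0 := by
    have h2 : d (n - 2) (n - 3) (f • τ n (n - 2) x) =
        f • d (n - 2) (n - 3) (τ n (n - 2) x) := map_smul _ _ _
    rw [hy, smul_sub, ← h1, ← h2, ← hd2 n x, sub_self]
  -- express in a basis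
  let b := Module.Free.chooseBasis Q (G (n - 3))
  have hcoef : ∀ i, f * b.repr y i = 0 := by
    intro i
    have := congrArg (fun z => b.repr z i) hfy
    simpa using this
  have hmem : ∀ i, b.repr y i ∈
      (Ideal.span {f} ⊔ (Ideal.span {f} : Submodule Q Q).annihilator) := by
    intro i
    refine le_sup_right (α := Ideal Q) ?_
    rw [Submodule.mem_annihilator]
    intro m hm
    rw [Ideal.mem_span_singleton] at hm
    obtain ⟨c, rfl⟩ := hm
    have : b.repr y i * f = 0 := by rw [mul_comm]; exact hcoef i
    calc b.repr y i • (f * c) = (b.repr y i * f) * c := by ring_nf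
    _ = 0 := by rw [this, zero_mul]
  rw [← b.sum_repr y]
  exact Submodule.sum_mem _ fun i _ =>
    Submodule.smul_mem_smul (hmem i) trivial
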